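/- For nonzero real numbers k and c, the Gaussian curvature K of the surface p_{k,c}(x,y) = (x, y, c e^{kx} cos ky), equivalently of the graph of F(x,y) = c e^{kx} cos ky, is given at every point (x,y) ∈ ℝ² by K = (F_xx F_yy − F_xy²)/(1 + F_x² + F_y²)² = − c² k⁴ e^{2kx} / (1 + c² k² e^{2kx})². In particular K depends only on x, so p_{k,c} has parallel K-contours: the contours of K project to straight lines parallel to the y-axis in the xy-plane. -/

import Mathlib

noncomputable section

theorem stmt_13 (k c : ℝ) (hk : k ≠ 0) (hc : c ≠ 0) :
    let F : ℝ → ℝ → ℝ := fun x y => c * Real.exp (k * x) * Real.cos (k * y)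
    let K : ℝ → ℝ → ℝ := fun x y =>
      let Fx := deriv (fun s => F s y) x
      let Fy := deriv (fun t => F x t) y
      let Fxx := deriv (fun s => deriv (fun s' => F s' y) s) x
      let Fxy := deriv (fun t => deriv (fun s => F s t) x) y
      let Fyy := deriv (fun t => deriv (fun t' => F x t') t) y
      (Fxx * Fyy - Fxy ^ 2) / (1 + Fx ^ 2 + Fy ^ 2) ^ 2
    (∀ x y : ℝ,
      K x y = -(c ^ 2 * k ^ 4 * Real.exp (2 * k * x)) /
        (1 + c ^ 2 * k ^ 2 * Real.exp (2 * k * x)) ^ 2) ∧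
    (∀ x y₁ y₂ : ℝ, K x y₁ = K x y₂) := by
  intro F K
  have hX : ∀ (b a x : ℝ), deriv (fun s => b * Real.exp (k * s) * a) x
      = b * k * Real.exp (k * x) * a := by
    intro b a x
    have h : HasDerivAt (fun s => b * Real.exp (k * s) * a)
        (b * (Real.exp (k * x) * (k * 1)) * a) x :=
      (((((hasDerivAt_id x).const_mul k).exp)).const_mul b).mul_const a
    rw [h.deriv]; ring
  have hY : ∀ (b y : ℝ), deriv (fun t => b * Real.cos (k * t)) y
      = -(b * k * Real.sin (k * y)) := by
    intro b y
    have h : HasDerivAt (fun t => b * Real.cos (k * t))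
        (b * (-Real.sin (k * y) * (k * 1))) y :=
      ((((hasDerivAt_id y).const_mul k).cos)).const_mul b
    rw [h.deriv]; ring
  have hS : ∀ (b y : ℝ), deriv (fun t => -(b * Real.sin (k * t))) y
      = -(b * k * Real.cos (k * y)) := by
    intro b y
    have h : HasDerivAt (fun t => -(b * Real.sin (k * t)))
        (-(b * (Real.cos (k * y) * (k * 1)))) y :=
      (((((hasDerivAt_id y).const_mul k).sin)).const_mul b).neg
    rw [h.deriv]; ring
  have hmain : ∀ x y : ℝ,
      K x y = -(c ^ 2 * k ^ 4 * Real.exp (2 * k * x)) /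
        (1 + c ^ 2 * k ^ 2 * Real.exp (2 * k * x)) ^ 2 := by
    intro x y
    have e1 : deriv (fun s => F s y) x = c * k * Real.exp (k * x) * Real.cos (k * y) :=
      hX c (Real.cos (k * y)) x
    have e2 : deriv (fun t => F x t) y = -((c * Real.exp (k * x)) * k * Real.sin (k * y)) :=
      hY (c * Real.exp (k * x)) y
    have e3 : deriv (fun s => deriv (fun s' => F s' y) s) x
        = (c * k) * k * Real.exp (k * x) * Real.cos (k * y) := by
      have h : (fun s => deriv (fun s' => F s' y) s)
          = fun s => (c * k) * Real.exp (k * s) * Real.cos (k * y) := by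
        funext s
        have := hX c (Real.cos (k * y)) s
        exact this
      rw [h]; exact hX (c * k) (Real.cos (k * y)) x
    have e4 : deriv (fun t => deriv (fun s => F s t) x) y
        = -((c * k * Real.exp (k * x)) * k * Real.sin (k * y)) := by
      have h : (fun t => deriv (fun s => F s t) x)
          = fun t => (c * k * Real.exp (k * x)) * Real.cos (k * t) := by
        funext t
        exact hX c (Real.cos (k * t)) x
      rw [h]; exact hY (c * k * Real.exp (k * x)) y
    have e5 : deriv (fun t => deriv (fun t' => F x t') t) y
        = -((c * Real.exp (k * x) * k) * k * Real.cos (k * y)) := by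
      have h : (fun t => deriv (fun t' => F x t') t)
          = fun t => -((c * Real.exp (k * x) * k) * Real.sin (k * t)) := by
        funext t
        rw [show (fun t' => F x t') = fun t' => (c * Real.exp (k * x)) * Real.cos (k * t') from rfl,
          hY (c * Real.exp (k * x)) t]
      rw [h]; exact hS (c * Real.exp (k * x) * k) y
    show (deriv (fun s => deriv (fun s' => F s' y) s) x *
          deriv (fun t => deriv (fun t' => F x t') t) y -
          deriv (fun t => deriv (fun s => F s t) x) y ^ 2) /
        (1 + deriv (fun s => F s y) x ^ 2 + deriv (fun t => F x t) y ^ 2) ^ 2 = _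
    rw [e1, e2, e3, e4, e5]
    have hsc := Real.sin_sq_add_cos_sq (k * y)
    have hexp2 : Real.exp (2 * k * x) = Real.exp (k * x) ^ 2 := by
      rw [sq, ← Real.exp_add]; ring_nf
    rw [hexp2]
    rw [div_eq_div_iff (by positivity) (by positivity)]
    linear_combination (c ^ 2 * k ^ 4 * Real.exp (k * x) ^ 2 *
        ((c ^ 2 * k ^ 2 * Real.exp (k * x) ^ 2) ^ 2 *
          (Real.sin (k * y) ^ 2 + Real.cos (k * y) ^ 2) - 1)) * hsc
  exact ⟨hmain, fun x y₁ y₂ => by rw [hmain x y₁, hmain x y₂]⟩
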